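/- For every bounded set B ⊆ N there exists δ > 0 such that every (u,v) ∈ 𝒩 with u ∈ B satisfies ‖v‖_V ≥ δ. -/

import Mathlib

open scoped InnerProductSpace
open Filter Topology

set_option maxHeartbeats 1000000 in
theorem stmt_14
    {W : Type*} [NormedAddCommGroup W] [InnerProductSpace ℝ W] [CompleteSpace W]
    {V : Type*} [NormedAddCommGroup V] [InnerProductSpace ℝ V] [CompleteSpace V]
    (ι : V →L[ℝ] W) (hι : Function.Injective ι)
    (c : ℝ) (hc : 0 < c) (hιc : ∀ v : V, ‖ι v‖ ≤ c * ‖v‖)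
    (Pp Pm : V →L[ℝ] V)
    (hP_sum : ∀ v : V, Pp v + Pm v = v)
    (hPp_idem : ∀ v : V, Pp (Pp v) = Pp v)
    (hPm_idem : ∀ v : V, Pm (Pm v) = Pm v)
    (hP_orth : ∀ v w : V, ⟪Pp v, Pm w⟫_ℝ = 0)
    (a : V →L[ℝ] V →L[ℝ] ℝ)
    (ha : ∀ v w : V, a v w = ⟪Pp v, Pp w⟫_ℝ - ⟪Pm v, Pm w⟫_ℝ)
    {N : Type*} [NormedAddCommGroup N] [InnerProductSpace ℝ N] [CompleteSpace N]
    (p : ℝ) (hp : 1 < p)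
    (b : N → V → ℝ) (f : N → ℝ → ℝ)
    (hb_C2 : ContDiff ℝ 2 (fun q : N × V => b q.1 q.2))
    (hb_zero : ∀ u : N, b u 0 = 0)
    (hb_nonneg : ∀ (u : N) (v : V), 0 ≤ b u v)
    (hf_cont : ContinuousOn (fun q : N × ℝ => f q.1 q.2) (Set.univ ×ˢ Set.Ici (0:ℝ)))
    (hf_zero : ∀ u : N, f u 0 = 0)
    (hf_mono : ∀ u : N, StrictMonoOn (f u) (Set.Ici (0:ℝ)))
    (hf_nonneg : ∀ (u : N) (t : ℝ), 0 ≤ t → 0 ≤ f u t)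
    (hgrad : ∀ (u : N) (v h : V), fderiv ℝ (b u) v h = f u ‖ι v‖ * ⟪ι v, ι h⟫_ℝ)
    (C₂ : ℝ → ℝ) (hC₂_cont : ContinuousOn C₂ (Set.Ici (0:ℝ)))
    (hC₂_pos : ∀ t : ℝ, 0 ≤ t → 0 < C₂ t)
    (hbII : ∀ (u : N) (v h k : V),
      |fderiv ℝ (fun w => fderiv ℝ (b u) w h) v k| ≤ C₂ ‖u‖ * ‖ι v‖ ^ (p - 1) * ‖ι h‖ * ‖ι k‖)
    :
    ∀ B : Set N, Bornology.IsBounded B →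
      ∃ δ : ℝ, 0 < δ ∧ ∀ (u : N) (v : V), u ∈ B →
        Pp v ≠ 0 →
        a v v = f u ‖ι v‖ * ⟪ι v, ι v⟫_ℝ →
        (∀ φ : V, Pm φ = φ → a v φ = f u ‖ι v‖ * ⟪ι v, ι φ⟫_ℝ) →
        δ ≤ ‖v‖ := by
  intro B hB
  obtain ⟨R, hR⟩ := isBounded_iff_forall_norm_le.mp hB
  set R' : ℝ := max R 0 with hR'def
  have hR'0 : (0:ℝ) ≤ R' := le_max_right _ _
  obtain ⟨x₀, hx₀, hmax⟩ := isCompact_Icc.exists_isMaxOn (s := Set.Icc (0:ℝ) R')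
    ⟨0, le_refl 0, hR'0⟩ (hC₂_cont.mono (fun t ht => ht.1))
  set M : ℝ := C₂ x₀ with hMdef
  have hM0 : 0 < M := hC₂_pos x₀ hx₀.1
  have hcp : (0:ℝ) < c ^ (p-1) := Real.rpow_pos_of_pos hc _
  have hX : (0:ℝ) < c^2 * M * c^(p-1) := by positivity
  refine ⟨(1/(c^2 * M * c^(p-1))) ^ (1/(p-1)), Real.rpow_pos_of_pos (by positivity) _, ?_⟩
  intro u v huB hPpv hav hφ
  have hv0 : v ≠ 0 := fun h => hPpv (by simp [h])
  have hvn : 0 < ‖v‖ := norm_pos_iff.mpr hv0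
  have hιv0 : ι v ≠ 0 := fun h => hv0 (hι (by simpa using h))
  set r : ℝ := ‖ι v‖ with hrdef
  have hr0 : 0 < r := norm_pos_iff.mpr hιv0
  set F : ℝ := f u r with hFdef
  have hF0 : 0 ≤ F := hf_nonneg u r hr0.le
  -- Step 1: 1 ≤ c^2 * F
  set w : V := Pp v with hwdef
  set m : V := Pm v with hmdef2
  have horth : ⟪w, m⟫_ℝ = 0 := hP_orth v v
  have hsum : w + m = v := hP_sum v
  have hPpm : Pp m = 0 := by
    have h1 := hP_sum m
    rw [hPm_idem v] at h1
    exact add_eq_right.mp h1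
  have e1 : ⟪w, w⟫_ℝ - ⟪m, m⟫_ℝ = F * ⟪ι v, ι v⟫_ℝ := (ha v v).symm.trans hav
  have e2 : -⟪m, m⟫_ℝ = F * ⟪ι v, ι m⟫_ℝ := by
    have h := hφ m (hPm_idem v)
    rw [ha v m, hPpm, hPm_idem v] at h
    simpa using h
  set z : V := v - (2:ℝ) • m with hzdef
  have hzwm : z = w - m := by
    rw [hzdef, ← hsum, two_smul]
    abel
  have hzn : ‖z‖ = ‖v‖ := by
    have h1 : ‖z‖^2 = ‖v‖^2 := by
      rw [hzwm, ← hsum, norm_sub_sq_real, norm_add_sq_real, horth]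
      ring
    have h2 := congrArg Real.sqrt h1
    rwa [Real.sqrt_sq (norm_nonneg _), Real.sqrt_sq (norm_nonneg _)] at h2
  have hιz : ι z = ι v - (2:ℝ) • ι m := by
    rw [hzdef, map_sub, map_smul]
  have key : ‖v‖^2 = F * ⟪ι v, ι z⟫_ℝ := by
    have hip : ⟪ι v, ι z⟫_ℝ = ⟪ι v, ι v⟫_ℝ - 2 * ⟪ι v, ι m⟫_ℝ := by
      rw [hιz, inner_sub_right, real_inner_smul_right]
    have hvsq : ‖v‖^2 = ⟪w, w⟫_ℝ + ⟪m, m⟫_ℝ := by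
      rw [real_inner_self_eq_norm_sq, real_inner_self_eq_norm_sq, ← hsum,
        norm_add_sq_real, horth]
      ring
    rw [hip, hvsq]
    linear_combination e1 - 2 * e2
  have hbound : ‖v‖^2 ≤ F * ((c * ‖v‖) * (c * ‖v‖)) := by
    have hcs : ⟪ι v, ι z⟫_ℝ ≤ ‖ι v‖ * ‖ι z‖ := real_inner_le_norm _ _
    have h2 : ‖ι z‖ ≤ c * ‖v‖ := by
      have := hιc z
      rwa [hzn] at this
    have h3 : ‖ι v‖ * ‖ι z‖ ≤ (c * ‖v‖) * (c * ‖v‖) :=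
      mul_le_mul (hιc v) h2 (norm_nonneg _) (by positivity)
    calc ‖v‖^2 = F * ⟪ι v, ι z⟫_ℝ := key
      _ ≤ F * (‖ι v‖ * ‖ι z‖) := mul_le_mul_of_nonneg_left hcs hF0
      _ ≤ F * ((c * ‖v‖) * (c * ‖v‖)) := mul_le_mul_of_nonneg_left h3 hF0
  have step1 : 1 ≤ c^2 * F := by
    nlinarith [hbound, mul_pos hvn hvn]
  -- Step 2: F ≤ C₂ ‖u‖ * r ^ (p - 1)
  have hbu : ContDiff ℝ 2 (b u) := hb_C2.comp (contDiff_const.prodMk contDiff_id)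
  have hG : ContDiff ℝ 1 (fun x : V => fderiv ℝ (b u) x) := hbu.fderiv_right (by norm_num)
  have hFv : ContDiff ℝ 1 (fun x : V => fderiv ℝ (b u) x v) := hG.clm_apply contDiff_const
  have hFvd : Differentiable ℝ (fun x : V => fderiv ℝ (b u) x v) :=
    hFv.differentiable one_ne_zero
  have hder : ∀ t ∈ Set.Icc (0:ℝ) 1,
      HasDerivWithinAt (fun t : ℝ => fderiv ℝ (b u) (t • v) v)
        (fderiv ℝ (fun x : V => fderiv ℝ (b u) x v) (t • v) v) (Set.Icc 0 1) t := by
    intro t _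
    have h1 : HasDerivAt (fun t : ℝ => t • v) v t := by
      simpa using (hasDerivAt_id t).smul_const v
    exact ((hFvd (t • v)).hasFDerivAt.comp_hasDerivAt t h1).hasDerivWithinAt
  have hbnd : ∀ t ∈ Set.Icc (0:ℝ) 1,
      ‖fderiv ℝ (fun x : V => fderiv ℝ (b u) x v) (t • v) v‖ ≤
        C₂ ‖u‖ * r ^ (p-1) * r * r := by
    intro t ht
    have h := hbII u (t • v) v v
    have hle : ‖ι (t • v)‖ ^ (p-1) ≤ r ^ (p-1) := by
      apply Real.rpow_le_rpow (norm_nonneg _) _ (by linarith)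
      have hsm : ι (t • v) = t • ι v := map_smul ι t v
      rw [hsm, norm_smul, Real.norm_eq_abs]
      calc |t| * ‖ι v‖ ≤ 1 * ‖ι v‖ := by
            apply mul_le_mul_of_nonneg_right _ (norm_nonneg _)
            rw [abs_le]; exact ⟨by linarith [ht.1], ht.2⟩
        _ = r := by rw [one_mul]
    have hC2u : 0 < C₂ ‖u‖ := hC₂_pos _ (norm_nonneg u)
    rw [← hrdef] at h
    have hmono : C₂ ‖u‖ * ‖ι (t • v)‖ ^ (p-1) ≤ C₂ ‖u‖ * r ^ (p-1) :=
      mul_le_mul_of_nonneg_left hle hC2u.le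
    calc ‖fderiv ℝ (fun x : V => fderiv ℝ (b u) x v) (t • v) v‖
        = |fderiv ℝ (fun x : V => fderiv ℝ (b u) x v) (t • v) v| := Real.norm_eq_abs _
      _ ≤ C₂ ‖u‖ * ‖ι (t • v)‖ ^ (p-1) * r * r := h
      _ ≤ C₂ ‖u‖ * r ^ (p-1) * r * r :=
          mul_le_mul_of_nonneg_right
            (mul_le_mul_of_nonneg_right hmono hr0.le) hr0.le
  have hmvt := Convex.norm_image_sub_le_of_norm_hasDerivWithin_le hder hbnd
    (convex_Icc (0:ℝ) 1) (Set.left_mem_Icc.mpr zero_le_one)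
    (Set.right_mem_Icc.mpr zero_le_one)
  have hg1 : fderiv ℝ (b u) ((1:ℝ) • v) v = F * (r * r) := by
    rw [one_smul, hgrad, real_inner_self_eq_norm_sq, ← hrdef, hFdef]
    ring
  have hg0 : fderiv ℝ (b u) ((0:ℝ) • v) v = 0 := by
    rw [zero_smul, hgrad]
    simp
  have step2a : F * (r * r) ≤ C₂ ‖u‖ * r ^ (p-1) * r * r := by
    rw [hg1, hg0] at hmvt
    have h1 : |F * (r * r)| ≤ C₂ ‖u‖ * r ^ (p-1) * r * r := by
      simp only [sub_zero, Real.norm_eq_abs, abs_one, mul_one] at hmvt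
      exact hmvt
    exact (le_abs_self _).trans h1
  have step2 : F ≤ C₂ ‖u‖ * r ^ (p-1) := by
    refine le_of_mul_le_mul_right ?_ (mul_pos hr0 hr0)
    calc F * (r * r) ≤ C₂ ‖u‖ * r ^ (p-1) * r * r := step2a
      _ = C₂ ‖u‖ * r ^ (p-1) * (r * r) := by ring
  -- combine
  have hub : ‖u‖ ∈ Set.Icc (0:ℝ) R' :=
    ⟨norm_nonneg u, le_trans (hR u huB) (le_max_left _ _)⟩
  have hMle : C₂ ‖u‖ ≤ M := hmax hub
  have hrc : r ^ (p-1) ≤ c ^ (p-1) * ‖v‖ ^ (p-1) := by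
    rw [← Real.mul_rpow hc.le (norm_nonneg v)]
    exact Real.rpow_le_rpow (norm_nonneg _) (hιc v) (by linarith)
  have h3 : C₂ ‖u‖ * r ^ (p-1) ≤ M * (c ^ (p-1) * ‖v‖ ^ (p-1)) :=
    mul_le_mul hMle hrc (Real.rpow_nonneg hr0.le _) hM0.le
  have final : 1 ≤ (c^2 * M * c^(p-1)) * ‖v‖^(p-1) := by
    have h4 : c^2 * F ≤ c^2 * (M * (c ^ (p-1) * ‖v‖ ^ (p-1))) :=
      mul_le_mul_of_nonneg_left (step2.trans h3) (sq_nonneg c)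
    calc (1:ℝ) ≤ c^2 * F := step1
      _ ≤ c^2 * (M * (c ^ (p-1) * ‖v‖ ^ (p-1))) := h4
      _ = (c^2 * M * c^(p-1)) * ‖v‖^(p-1) := by ring
  have h5 : 1/(c^2 * M * c^(p-1)) ≤ ‖v‖^(p-1) := by
    rw [div_le_iff₀ hX]
    calc (1:ℝ) ≤ (c^2 * M * c^(p-1)) * ‖v‖^(p-1) := final
      _ = ‖v‖^(p-1) * (c^2 * M * c^(p-1)) := mul_comm _ _
  have hp1 : (0:ℝ) < p - 1 := by linarith
  have h6 : (1/(c^2 * M * c^(p-1)))^(1/(p-1)) ≤ (‖v‖^(p-1))^(1/(p-1)) :=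
    Real.rpow_le_rpow (one_div_nonneg.mpr hX.le) h5 (one_div_pos.mpr hp1).le
  have h7 : (‖v‖^(p-1))^(1/(p-1)) = ‖v‖ := by
    rw [← Real.rpow_mul (norm_nonneg v), mul_one_div_cancel (by linarith : p - 1 ≠ 0),
      Real.rpow_one]
  rw [h7] at h6
  exact h6
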